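/- arXiv:2301.00926 — 2 statements merged into one kernel-verified Lean document; each statement's English description precedes it below -/
import Mathlib

section
/- The number of permutations in S_n avoiding the pattern 231 equals the n-th Catalan number. -/
/-- A word contains the pattern 231: there are positions `i < j < k`
with `w k < w i < w j`. -/
def Contains231 (w : List ℕ) : Prop :=
  ∃ i j k : ℕ, i < j ∧ j < k ∧ k < w.length ∧
    w.getD k 0 < w.getD i 0 ∧ w.getD i 0 < w.getD j 0

/-- A word avoids the pattern 231. -/
def Avoids231 (w : List ℕ) : Prop := ¬ Contains231 w

/-- `w` is (the one-line notation of) a permutation of `{1, ..., n}`. -/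
def IsPermWord (n : ℕ) (w : List ℕ) : Prop := w.Perm (List.range' 1 n)

open scoped Classical in
noncomputable def avoidF (l : List ℕ) : Finset (List ℕ) :=
  l.permutations.toFinset.filter Avoids231

lemma mem_avoidF {l w : List ℕ} : w ∈ avoidF l ↔ w.Perm l ∧ Avoids231 w := by
  simp [avoidF, List.mem_permutations]

lemma getD_left {A B : List ℕ} {m i : ℕ} (h : i < A.length) :
    (A ++ m :: B).getD i 0 = A.getD i 0 := List.getD_append _ _ _ _ h

lemma getD_mid (A B : List ℕ) (m : ℕ) :
    (A ++ m :: B).getD A.length 0 = m := by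
  rw [List.getD_append_right _ _ _ _ le_rfl, Nat.sub_self, List.getD_cons_zero]

lemma getD_right {A B : List ℕ} {m i : ℕ} (h : A.length < i) :
    (A ++ m :: B).getD i 0 = B.getD (i - A.length - 1) 0 := by
  rw [List.getD_append_right _ _ _ _ h.le]
  obtain ⟨j, hj⟩ : ∃ j, i - A.length = j + 1 := ⟨i - A.length - 1, by omega⟩
  rw [hj, List.getD_cons_succ]; simp

lemma getD_mem {A : List ℕ} {i : ℕ} (h : i < A.length) : A.getD i 0 ∈ A := by
  rw [List.getD_eq_getElem _ _ h]; exact List.getElem_mem _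

lemma exists_getD {A : List ℕ} {a : ℕ} (h : a ∈ A) : ∃ i < A.length, A.getD i 0 = a := by
  obtain ⟨i, hi, hg⟩ := List.getElem_of_mem h
  exact ⟨i, hi, by rw [List.getD_eq_getElem _ _ hi, hg]⟩

lemma avoids_append_max {A B : List ℕ} {m : ℕ}
    (hAm : ∀ a ∈ A, a < m) (hBm : ∀ b ∈ B, b < m) :
    Avoids231 (A ++ m :: B) ↔
      Avoids231 A ∧ Avoids231 B ∧ ∀ a ∈ A, ∀ b ∈ B, ¬ b < a := by
  have hlen : (A ++ m :: B).length = A.length + 1 + B.length := by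
    simp only [List.length_append, List.length_cons]; omega
  constructor
  · intro H
    refine ⟨?_, ?_, ?_⟩
    · rintro ⟨i, j, k, hij, hjk, hk, h1, h2⟩
      refine H ⟨i, j, k, hij, hjk, by omega, ?_, ?_⟩
      · rwa [getD_left (by omega), getD_left (by omega)]
      · rwa [getD_left (by omega), getD_left (by omega)]
    · rintro ⟨i, j, k, hij, hjk, hk, h1, h2⟩
      set p := A.length
      refine H ⟨p + 1 + i, p + 1 + j, p + 1 + k, by omega, by omega, by omega, ?_, ?_⟩
      · rw [getD_right (by omega : p < p + 1 + k), getD_right (by omega : p < p + 1 + i)]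
        have e1 : p + 1 + k - p - 1 = k := by omega
        have e2 : p + 1 + i - p - 1 = i := by omega
        rwa [e1, e2]
      · rw [getD_right (by omega : p < p + 1 + i), getD_right (by omega : p < p + 1 + j)]
        have e1 : p + 1 + i - p - 1 = i := by omega
        have e2 : p + 1 + j - p - 1 = j := by omega
        rwa [e1, e2]
    · intro a ha b hb hba
      set p := A.length
      obtain ⟨i, hi, hia⟩ := exists_getD ha
      obtain ⟨kk, hkk, hkb⟩ := exists_getD hb
      refine H ⟨i, p, p + 1 + kk, by omega, by omega, by omega, ?_, ?_⟩
      · rw [getD_right (by omega : p < p + 1 + kk), getD_left hi]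
        have e1 : p + 1 + kk - p - 1 = kk := by omega
        rw [e1, hkb, hia]; exact hba
      · rw [getD_left hi, getD_mid, hia]; exact hAm a ha
  · rintro ⟨hA, hB, hAB⟩ ⟨i, j, k, hij, hjk, hk, h1, h2⟩
    set p := A.length with hp
    rw [hlen] at hk
    have hcontr : ∀ x y : ℕ, x < p → p < y → y < p + 1 + B.length →
        ¬ ((A ++ m :: B).getD y 0 < (A ++ m :: B).getD x 0) := by
      intro x y hx hy hyl
      rw [getD_left hx, getD_right hy]
      exact hAB _ (getD_mem hx) _ (getD_mem (by omega))
    rcases lt_trichotomy k p with hkp | hkp | hkp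
    · -- all in A
      exact hA ⟨i, j, k, hij, hjk, hkp, by rwa [getD_left (by omega), getD_left (by omega)] at h1,
        by rwa [getD_left (by omega), getD_left (by omega)] at h2⟩
    · -- k = p : w k = m  maximal
      rw [hkp, getD_mid] at h1
      rw [getD_left (by omega)] at h1 h2
      exact absurd h1 (not_lt.mpr (hAm _ (getD_mem (by omega))).le)
    · -- k > p
      rcases lt_trichotomy j p with hjp | hjp | hjp
      · exact hcontr i k (by omega) hkp hk h1
      · exact hcontr i k (by omega) hkp hk h1
      · rcases lt_trichotomy i p with hip | hip | hip
        · exact hcontr i k hip hkp hk h1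
        · -- i = p : w i = m
          rw [hip, getD_mid] at h2
          rw [getD_right (by omega : p < j)] at h2
          exact absurd h2 (not_lt.mpr (hBm _ (getD_mem (by omega))).le)
        · -- all in B
          refine hB ⟨i - p - 1, j - p - 1, k - p - 1, by omega, by omega, by omega, ?_, ?_⟩
          · rwa [getD_right hip, getD_right hkp] at h1
          · rwa [getD_right hip, getD_right hjp] at h2

lemma perm_take_drop {A B s : List ℕ} (hs : List.Pairwise (· ≤ ·) s) (hsn : s.Nodup)
    (hperm : (A ++ B).Perm s) (hAB : ∀ a ∈ A, ∀ b ∈ B, a ≤ b) :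
    A.Perm (s.take A.length) ∧ B.Perm (s.drop A.length) := by
  classical
  have hABn : (A ++ B).Nodup := hperm.symm.nodup hsn
  obtain ⟨hAn, hBn, hABdisj⟩ := List.nodup_append.mp hABn
  set k := A.length with hk
  have hks : k ≤ s.length := by
    have := hperm.length_eq; simp only [List.length_append] at this; omega
  have hsplit := List.take_append_drop k s
  have htd : (s.take k ++ s.drop k).Nodup := by rw [hsplit]; exact hsn
  obtain ⟨htn, hdn, hdisj⟩ := List.nodup_append.mp htd
  have horder : ∀ x ∈ s.take k, ∀ y ∈ s.drop k, x ≤ y :=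
    (List.pairwise_append.mp (by rw [hsplit]; exact hs)).2.2
  have hmemA : ∀ a ∈ A, a ∈ s := fun a ha => hperm.mem_iff.mp (by simp [ha])
  have hmem_s : ∀ x ∈ s, x ∈ A ∨ x ∈ B := by
    intro x hx
    have := hperm.mem_iff.mpr hx
    simpa using this
  have hcardA : A.toFinset.card = k := by rw [List.toFinset_card_of_nodup hAn]
  have hcardT : (s.take k).toFinset.card = k := by
    rw [List.toFinset_card_of_nodup htn, List.length_take]; omega
  have hsub : A.toFinset ⊆ (s.take k).toFinset := by
    intro a ha
    simp only [List.mem_toFinset] at ha ⊢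
    by_contra hat
    have had : a ∈ s.drop k := by
      rcases List.mem_append.mp (by rw [hsplit]; exact hmemA a ha) with h | h
      · exact absurd h hat
      · exact h
    have hnsub : ¬ (s.take k).toFinset ⊆ A.toFinset := by
      intro hsub2
      have heq := Finset.eq_of_subset_of_card_le hsub2 (by omega)
      have h3 : a ∈ (s.take k).toFinset := heq ▸ List.mem_toFinset.mpr ha
      exact hat (List.mem_toFinset.mp h3)
    obtain ⟨c, hc1, hc2⟩ := Finset.not_subset.mp hnsub
    rw [List.mem_toFinset] at hc1
    rw [List.mem_toFinset] at hc2
    have hcs : c ∈ s := by rw [← hsplit]; exact List.mem_append.mpr (Or.inl hc1)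
    have hcB : c ∈ B := (hmem_s c hcs).resolve_left hc2
    have h1 : a ≤ c := hAB a ha c hcB
    have h2 : c ≤ a := horder c hc1 a had
    have : a = c := le_antisymm h1 h2
    subst this
    exact hdisj _ hc1 _ had rfl
  have heq : A.toFinset = (s.take k).toFinset :=
    Finset.eq_of_subset_of_card_le hsub (by omega)
  have hAperm : A.Perm (s.take k) :=
    List.perm_of_nodup_nodup_toFinset_eq hAn htn heq
  have h1 : s.Perm (s.take k ++ s.drop k) := by rw [hsplit]
  have h2 : (A ++ B).Perm (A ++ s.drop k) :=
    hperm.trans (h1.trans (hAperm.symm.append (List.Perm.refl _)))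
  exact ⟨hAperm, (List.perm_append_left_iff A).mp h2⟩

lemma avoids_nil : Avoids231 [] := by
  rintro ⟨i, j, k, _, _, hk, _⟩
  simp at hk

lemma card_avoidF : ∀ n : ℕ, ∀ l : List ℕ, l.Nodup → l.length = n → (avoidF l).card = catalan n := by
  intro n
  induction n using Nat.strong_induction_on with
  | _ n IH =>
  intro l hl hlen
  rcases n with _ | n'
  · -- n = 0
    have hl0 : l = [] := List.length_eq_zero_iff.mp hlen
    subst hl0
    have : avoidF [] = {[]} := by
      ext w
      simp only [mem_avoidF, List.perm_nil, Finset.mem_singleton]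
      constructor
      · rintro ⟨rfl, _⟩; rfl
      · rintro rfl; exact ⟨rfl, avoids_nil⟩
    rw [this]
    simp [catalan]
  · -- n = n' + 1
    classical
    have hlne : l ≠ [] := by intro h; rw [h] at hlen; simp at hlen
    have hne : l.toFinset.Nonempty := by
      obtain ⟨x, hx⟩ := List.exists_mem_of_ne_nil l hlne
      exact ⟨x, List.mem_toFinset.mpr hx⟩
    set m := l.toFinset.max' hne with hm
    have hm_mem : m ∈ l := List.mem_toFinset.mp (Finset.max'_mem _ _)
    have hm_max : ∀ x ∈ l, x ≤ m := fun x hx => Finset.le_max' _ x (List.mem_toFinset.mpr hx)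
    set s := (l.erase m).insertionSort (· ≤ ·) with hsdef
    have hs_perm : s.Perm (l.erase m) := List.perm_insertionSort _ _
    have hs_sorted : List.Pairwise (· ≤ ·) s := List.pairwise_insertionSort _ _
    have he_nodup : (l.erase m).Nodup := hl.erase m
    have hs_nodup : s.Nodup := hs_perm.symm.nodup he_nodup
    have hs_len : s.length = n' := by
      rw [hs_perm.length_eq, List.length_erase_of_mem hm_mem, hlen]
      omega
    have hs_mem : ∀ x, x ∈ s ↔ (x ≠ m ∧ x ∈ l) := by
      intro x
      rw [hs_perm.mem_iff, hl.mem_erase_iff]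
    have hs_lt : ∀ x ∈ s, x < m := by
      intro x hx
      obtain ⟨hne', hxl⟩ := (hs_mem x).mp hx
      exact lt_of_le_of_ne (hm_max x hxl) hne'
    have hmls : m ∉ s := fun h => lt_irrefl m (hs_lt m h)
    have l_perm : l.Perm (m :: s) := (List.perm_cons_erase hm_mem).trans ((hs_perm.symm).cons m)
    have horder : ∀ k : ℕ, ∀ x ∈ s.take k, ∀ y ∈ s.drop k, x ≤ y := by
      intro k
      exact (List.pairwise_append.mp (by rw [List.take_append_drop]; exact hs_sorted)).2.2
    set T : ℕ → Finset (List ℕ) :=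
      fun k => ((avoidF (s.take k)) ×ˢ (avoidF (s.drop k))).image (fun p => p.1 ++ m :: p.2)
      with hT
    -- length of first component of members of avoidF (s.take k)
    have hlenA : ∀ k ≤ n', ∀ A ∈ avoidF (s.take k), A.length = k ∧ m ∉ A := by
      intro k hk A hA
      have hp := (mem_avoidF.mp hA).1
      constructor
      · rw [hp.length_eq, List.length_take]; omega
      · intro hmA
        exact hmls ((List.take_sublist k s).mem (hp.mem_iff.mp hmA))
    have hlenB : ∀ k : ℕ, ∀ B ∈ avoidF (s.drop k), (∀ b ∈ B, b ∈ s.drop k) := by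
      intro k B hB b hb
      exact (mem_avoidF.mp hB).1.mem_iff.mp hb
    -- main set identity
    have hmain : avoidF l = (Finset.range (n' + 1)).biUnion T := by
      ext w
      simp only [Finset.mem_biUnion, Finset.mem_range, hT, Finset.mem_image, Finset.mem_product,
        Prod.exists]
      rw [mem_avoidF]
      constructor
      · rintro ⟨hwp, hwa⟩
        have hwn : w.Nodup := hwp.symm.nodup hl
        have hmw : m ∈ w := hwp.mem_iff.mpr hm_mem
        obtain ⟨A, B, rfl⟩ := List.append_of_mem hmw
        obtain ⟨hAn, hmBn, hdisj⟩ := List.nodup_append.mp hwn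
        have hmB : m ∉ B := (List.nodup_cons.mp hmBn).1
        have hBn : B.Nodup := (List.nodup_cons.mp hmBn).2
        have hmA : m ∉ A := fun h => hdisj _ h _ List.mem_cons_self rfl
        have hAlt : ∀ a ∈ A, a < m := by
          intro a ha
          refine lt_of_le_of_ne (hm_max a (hwp.mem_iff.mp (by simp [ha]))) ?_
          rintro rfl; exact hmA ha
        have hBlt : ∀ b ∈ B, b < m := by
          intro b hb
          refine lt_of_le_of_ne (hm_max b (hwp.mem_iff.mp (by simp [hb]))) ?_
          rintro rfl; exact hmB hb
        obtain ⟨hAa, hBa, hcross⟩ := (avoids_append_max hAlt hBlt).mp hwa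
        have hcross' : ∀ a ∈ A, ∀ b ∈ B, a ≤ b := fun a ha b hb => le_of_not_gt (hcross a ha b hb)
        have hABperm : (A ++ B).Perm s :=
          (List.perm_cons m).mp (List.perm_middle.symm.trans (hwp.trans l_perm))
        obtain ⟨hAperm, hBperm⟩ := perm_take_drop hs_sorted hs_nodup hABperm hcross'
        have hkle : A.length ≤ n' := by
          have := hABperm.length_eq
          simp only [List.length_append] at this
          omega
        exact ⟨A.length, by omega, A, B,
          ⟨⟨mem_avoidF.mpr ⟨hAperm, hAa⟩, mem_avoidF.mpr ⟨hBperm, hBa⟩⟩, rfl⟩⟩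
      · rintro ⟨k, hk, A, B, ⟨⟨hA, hB⟩, rfl⟩⟩
        obtain ⟨hAperm, hAa⟩ := mem_avoidF.mp hA
        obtain ⟨hBperm, hBa⟩ := mem_avoidF.mp hB
        have hAmem : ∀ a ∈ A, a ∈ s.take k := fun a ha => hAperm.mem_iff.mp ha
        have hBmem : ∀ b ∈ B, b ∈ s.drop k := fun b hb => hBperm.mem_iff.mp hb
        have hAlt : ∀ a ∈ A, a < m :=
          fun a ha => hs_lt a ((List.take_sublist k s).mem (hAmem a ha))
        have hBlt : ∀ b ∈ B, b < m :=
          fun b hb => hs_lt b ((List.drop_sublist k s).mem (hBmem b hb))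
        have hABs : (A ++ B).Perm s := by
          have := hAperm.append hBperm
          rwa [List.take_append_drop] at this
        refine ⟨List.perm_middle.trans ((hABs.cons m).trans l_perm.symm), ?_⟩
        refine (avoids_append_max hAlt hBlt).mpr ⟨hAa, hBa, ?_⟩
        intro a ha b hb
        exact not_lt.mpr (horder k a (hAmem a ha) b (hBmem b hb))
    -- disjointness
    have hdisjT : ∀ k1 ∈ Finset.range (n' + 1), ∀ k2 ∈ Finset.range (n' + 1), k1 ≠ k2 →
        Disjoint (T k1) (T k2) := by
      have key : ∀ k1 k2 : ℕ, k1 < n' + 1 → k2 < n' + 1 → k1 < k2 →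
          ∀ w, w ∈ T k1 → w ∉ T k2 := by
        intro k1 k2 hk1 hk2 hlt w hw1 hw2
        simp only [hT, Finset.mem_image, Finset.mem_product, Prod.exists] at hw1 hw2
        obtain ⟨A1, B1, ⟨hA1, _⟩, rfl⟩ := hw1
        obtain ⟨A2, B2, ⟨hA2, _⟩, heq⟩ := hw2
        obtain ⟨hl1, _⟩ := hlenA k1 (by omega) A1 hA1
        obtain ⟨hl2, hm2⟩ := hlenA k2 (by omega) A2 hA2
        have e1 : (A1 ++ m :: B1).getD k1 0 = m := by rw [← hl1]; exact getD_mid _ _ _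
        have e2 : (A2 ++ m :: B2).getD k1 0 = A2.getD k1 0 := getD_left (by omega)
        rw [heq, e1] at e2
        exact hm2 (by rw [e2]; exact getD_mem (by omega : k1 < A2.length))
      intro k1 h1 k2 h2 hne'
      rw [Finset.mem_range] at h1 h2
      rcases lt_or_gt_of_ne hne' with h | h
      · exact Finset.disjoint_left.mpr (fun w hw1 hw2 => key k1 k2 h1 h2 h w hw1 hw2)
      · exact Finset.disjoint_right.mpr (fun w hw2 hw1 => key k2 k1 h2 h1 h w hw2 hw1)
    -- card of each T k
    have hcardT : ∀ k ∈ Finset.range (n' + 1), (T k).card = catalan k * catalan (n' - k) := by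
      intro k hk
      rw [Finset.mem_range] at hk
      have hinj : Set.InjOn (fun p : List ℕ × List ℕ => p.1 ++ m :: p.2)
          ↑((avoidF (s.take k)) ×ˢ (avoidF (s.drop k))) := by
        rintro ⟨A1, B1⟩ hp ⟨A2, B2⟩ hq heq
        simp only [Finset.coe_product, Set.mem_prod, Finset.mem_coe] at hp hq
        simp only at heq
        have hl1 := (hlenA k (by omega) A1 hp.1).1
        have hl2 := (hlenA k (by omega) A2 hq.1).1
        obtain ⟨h1, h2⟩ := List.append_inj heq (by omega)
        have h3 : B1 = B2 := by injection h2
        simp [h1, h3]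
      rw [hT]
      simp only
      rw [Finset.card_image_of_injOn hinj, Finset.card_product]
      have ht_nodup : (s.take k).Nodup := (List.take_sublist k s).nodup hs_nodup
      have hd_nodup : (s.drop k).Nodup := (List.drop_sublist k s).nodup hs_nodup
      have ht_len : (s.take k).length = k := by rw [List.length_take]; omega
      have hd_len : (s.drop k).length = n' - k := by rw [List.length_drop]; omega
      rw [IH k (by omega) _ ht_nodup ht_len, IH (n' - k) (by omega) _ hd_nodup hd_len]
    rw [hmain, Finset.card_biUnion hdisjT]
    rw [Finset.sum_congr rfl hcardT]
    rw [catalan_succ]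
    exact (Fin.sum_univ_eq_sum_range (fun i => catalan i * catalan (n' - i)) (n' + 1)).symm


theorem card_avoids231_eq_catalan (n : ℕ) :
    {w : List ℕ | IsPermWord n w ∧ Avoids231 w}.ncard =
      (2 * n).choose n / (n + 1) := by
  have h1 : {w : List ℕ | IsPermWord n w ∧ Avoids231 w} = ↑(avoidF (List.range' 1 n)) := by
    ext w
    simp only [Set.mem_setOf_eq, Finset.mem_coe, mem_avoidF, IsPermWord]
  have hnd : (List.range' 1 n).Nodup := List.nodup_range'
  have hln : (List.range' 1 n).length = n := by simp
  rw [h1, Set.ncard_coe_finset, card_avoidF n _ hnd hln, catalan_eq_centralBinom_div]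
  rfl
end

section
/- West's stack-sorting map weakly decreases the number of inversions: for every permutation p in S_n, the number of inversions of s(p) is at most the number of inversions of p, with equality if and only if p is the identity. -/
/-- West's stack-sorting map, implemented with a fuel parameter.
`stackSortAux (fuel+1) w` splits `w = L ++ [m] ++ R` at (the unique, for words with
distinct letters, occurrence of) its maximum letter `m` and returns `s L ++ s R ++ [m]`. -/
def stackSortAux : ℕ → List ℕ → List ℕ
  | 0, _ => []
  | _ + 1, [] => []
  | fuel + 1, w =>
    let m := w.foldr max 0
    let L := w.takeWhile (fun x => x ≠ m)
    let R := (w.dropWhile (fun x => x ≠ m)).tail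
    stackSortAux fuel L ++ stackSortAux fuel R ++ [m]

/-- West's stack-sorting map `s` on words of natural numbers. -/
def stackSort (w : List ℕ) : List ℕ := stackSortAux w.length w

/-- The number of inversions of a word: pairs of positions `i < j` with `w i > w j`. -/
noncomputable def inversions (w : List ℕ) : ℕ :=
  {p : ℕ × ℕ | p.1 < p.2 ∧ p.2 < w.length ∧ w.getD p.2 0 < w.getD p.1 0}.ncard


def inv : List ℕ → ℕ
  | [] => 0
  | x :: xs => xs.countP (fun y => y < x) + inv xs

def cross (a b : List ℕ) : ℕ := (a.map (fun x => b.countP (fun y => y < x))).sum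

lemma countP_eq_sum (p : ℕ → Bool) (w : List ℕ) :
    w.countP p = ∑ k ∈ Finset.range w.length, if p (w.getD k 0) then 1 else 0 := by
  induction w with
  | nil => simp
  | cons x xs ih =>
      rw [List.countP_cons, List.length_cons, Finset.sum_range_succ']
      simp only [List.getD_cons_succ, List.getD_cons_zero, ← ih]


lemma sum_eq_inv (w : List ℕ) :
    ∑ i ∈ Finset.range w.length, ∑ j ∈ Finset.range w.length,
      (if i < j ∧ w.getD j 0 < w.getD i 0 then 1 else 0) = inv w := by
  induction w with
  | nil => simp [inv]
  | cons x xs ih =>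
      rw [List.length_cons, Finset.sum_range_succ']
      have h0 : ∑ j ∈ Finset.range (xs.length + 1),
          (if 0 < j ∧ (x :: xs).getD j 0 < (x :: xs).getD 0 0 then 1 else 0)
          = xs.countP (fun y => y < x) := by
        rw [Finset.sum_range_succ', countP_eq_sum]
        simp
      have h1 : ∀ i, ∑ j ∈ Finset.range (xs.length + 1),
          (if i + 1 < j ∧ (x :: xs).getD j 0 < (x :: xs).getD (i+1) 0 then 1 else 0)
          = ∑ j ∈ Finset.range xs.length,
          (if i < j ∧ xs.getD j 0 < xs.getD i 0 then 1 else 0) := by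
        intro i
        rw [Finset.sum_range_succ']
        simp
      simp only [h1, h0, ih, inv]
      omega

lemma inversions_eq_inv (w : List ℕ) : inversions w = inv w := by
  have hset : {p : ℕ × ℕ | p.1 < p.2 ∧ p.2 < w.length ∧ w.getD p.2 0 < w.getD p.1 0}
      = ↑((Finset.range w.length ×ˢ Finset.range w.length).filter
          (fun p : ℕ × ℕ => p.1 < p.2 ∧ w.getD p.2 0 < w.getD p.1 0)) := by
    ext ⟨i, j⟩
    simp only [Set.mem_setOf_eq, Finset.coe_filter, Finset.mem_product, Finset.mem_range,
      Set.mem_setOf_eq]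
    constructor
    · rintro ⟨h1, h2, h3⟩; exact ⟨⟨lt_trans h1 h2, h2⟩, h1, h3⟩
    · rintro ⟨⟨_, h2⟩, h1, h3⟩; exact ⟨h1, h2, h3⟩
  rw [inversions, hset, Set.ncard_coe_finset, Finset.card_filter, Finset.sum_product,
    ← sum_eq_inv]

lemma inv_append (a b : List ℕ) : inv (a ++ b) = inv a + inv b + cross a b := by
  induction a with
  | nil => simp [inv, cross]
  | cons x xs ih =>
      simp only [List.cons_append, inv, cross, List.map_cons, List.sum_cons,
        List.append_eq, List.countP_append, ih]
      omega

lemma cross_perm_left {a a' : List ℕ} (h : a.Perm a') (b : List ℕ) : cross a b = cross a' b :=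
  (h.map _).sum_eq

lemma cross_perm_right (a : List ℕ) {b b' : List ℕ} (h : b.Perm b') : cross a b = cross a b' := by
  unfold cross
  congr 1
  exact List.map_congr_left fun x _ => h.countP_eq _

lemma cross_append_right (a b c : List ℕ) : cross a (b ++ c) = cross a b + cross a c := by
  unfold cross
  rw [← List.sum_map_add]
  congr 1
  exact List.map_congr_left fun x _ => by rw [List.countP_append]

lemma cross_eq_zero {a b : List ℕ} (h : ∀ y ∈ b, ∀ x ∈ a, ¬ y < x) : cross a b = 0 := by
  unfold cross
  rw [List.sum_eq_zero]
  intro n hn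
  simp only [List.mem_map] at hn
  obtain ⟨x, hx, rfl⟩ := hn
  rw [List.countP_eq_zero]
  intro y hy
  simpa using h y hy x hx

lemma cross_eq_length {a b : List ℕ} (m : ℕ) (h : ∀ y ∈ b, y < m) : cross [m] b = b.length := by
  simp only [cross, List.map_cons, List.map_nil, List.sum_cons, List.sum_nil, Nat.add_zero]
  rw [List.countP_eq_length]
  intro y hy; simpa using h y hy

lemma foldr_max_mem : ∀ (w : List ℕ), w ≠ [] → w.foldr max 0 ∈ w := by
  intro w
  induction w with
  | nil => simp
  | cons x xs ih =>
      intro _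
      rcases eq_or_ne xs [] with rfl | hne
      · simp
      · simp only [List.foldr_cons]
        rcases le_total x (xs.foldr max 0) with h | h
        · rw [max_eq_right h]; exact List.mem_cons_of_mem _ (ih hne)
        · rw [max_eq_left h]; exact List.mem_cons_self

lemma le_foldr_max (w : List ℕ) : ∀ x ∈ w, x ≤ w.foldr max 0 := by
  induction w with
  | nil => simp
  | cons y ys ih =>
      intro x hx
      rcases List.mem_cons.1 hx with rfl | h
      · exact le_max_left _ _
      · exact le_trans (ih x h) (le_max_right _ _)

-- decomposition
lemma split_at_max (w : List ℕ) (hw : w ≠ []) :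
    w = w.takeWhile (fun x => x ≠ w.foldr max 0) ++
        w.foldr max 0 :: (w.dropWhile (fun x => x ≠ w.foldr max 0)).tail := by
  set m := w.foldr max 0 with hm
  have hmem : m ∈ w := foldr_max_mem w hw
  have hdrop : w.dropWhile (fun x => x ≠ m) ≠ [] := by
    intro h
    have := List.dropWhile_eq_nil_iff.1 h m hmem
    simp at this
  have hhead : (w.dropWhile (fun x => x ≠ m)).head hdrop = m := by
    have := List.head_dropWhile_not (fun x => x ≠ m) hdrop
    simpa using this
  conv_lhs => rw [← List.takeWhile_append_dropWhile (p := fun x => x ≠ m) (l := w)]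
  congr 1
  conv_lhs => rw [← List.cons_head_tail hdrop]
  rw [hhead]

lemma length_split (w : List ℕ) (hw : w ≠ []) :
    (w.takeWhile (fun x => x ≠ w.foldr max 0)).length < w.length ∧
    ((w.dropWhile (fun x => x ≠ w.foldr max 0)).tail).length < w.length := by
  have h := split_at_max w hw
  constructor <;> (conv_rhs => rw [h]) <;> simp <;> omega

lemma stackSortAux_nil : ∀ f, stackSortAux f [] = [] := by
  intro f; cases f <;> rfl

lemma stackSortAux_cons (f : ℕ) (x : ℕ) (xs : List ℕ) :
    stackSortAux (f + 1) (x :: xs) =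
      stackSortAux f ((x :: xs).takeWhile (fun y => y ≠ (x :: xs).foldr max 0)) ++
      stackSortAux f (((x :: xs).dropWhile (fun y => y ≠ (x :: xs).foldr max 0)).tail) ++
      [(x :: xs).foldr max 0] := by
  rfl

lemma stackSortAux_congr : ∀ f g w, w.length ≤ f → w.length ≤ g →
    stackSortAux f w = stackSortAux g w := by
  intro f
  induction f with
  | zero =>
      intro g w hf _
      rw [List.length_eq_zero_iff.1 (Nat.le_zero.1 hf), stackSortAux_nil, stackSortAux_nil]
  | succ f ih =>
      intro g w hf hg
      cases w with
      | nil => rw [stackSortAux_nil, stackSortAux_nil]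
      | cons x xs =>
          cases g with
          | zero => simp at hg
          | succ g =>
              have hne : (x :: xs) ≠ [] := by simp
              obtain ⟨hL, hR⟩ := length_split (x :: xs) hne
              rw [stackSortAux_cons, stackSortAux_cons]
              congr 1
              congr 1
              · exact ih g _ (by omega) (by omega)
              · exact ih g _ (by omega) (by omega)

lemma stackSort_cons (x : ℕ) (xs : List ℕ) :
    stackSort (x :: xs) =
      stackSort ((x :: xs).takeWhile (fun y => y ≠ (x :: xs).foldr max 0)) ++
      stackSort (((x :: xs).dropWhile (fun y => y ≠ (x :: xs).foldr max 0)).tail) ++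
      [(x :: xs).foldr max 0] := by
  have hne : (x :: xs) ≠ [] := by simp
  obtain ⟨hL, hR⟩ := length_split (x :: xs) hne
  simp only [List.length_cons] at hL hR
  rw [stackSort, List.length_cons, stackSortAux_cons]
  rw [stackSort, stackSort]
  congr 1
  congr 1
  · exact stackSortAux_congr _ _ _ (by omega) le_rfl
  · exact stackSortAux_congr _ _ _ (by omega) le_rfl

lemma stackSort_nil : stackSort [] = [] := rfl

lemma main_lemma : ∀ (n : ℕ) (w : List ℕ), w.length ≤ n → w.Nodup →
    (stackSort w).Perm w ∧ inv (stackSort w) ≤ inv w ∧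
      (inv (stackSort w) = inv w ↔ w.Pairwise (· < ·)) := by
  intro n
  induction n with
  | zero =>
      intro w hw _
      rw [List.length_eq_zero_iff.1 (Nat.le_zero.1 hw), stackSort_nil]
      exact ⟨List.Perm.refl _, le_refl _, by simp⟩
  | succ n ih =>
      intro w hlen hnd
      cases w with
      | nil =>
          rw [stackSort_nil]
          exact ⟨List.Perm.refl _, le_refl _, by simp⟩
      | cons x xs =>
        have hne : (x :: xs) ≠ [] := by simp
        set w := x :: xs with hw
        set m := w.foldr max 0 with hm
        set L := w.takeWhile (fun y => y ≠ m) with hLdef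
        set R := (w.dropWhile (fun y => y ≠ m)).tail with hRdef
        have hsplit : w = L ++ m :: R := split_at_max w hne
        have hlenL : L.length < w.length := (length_split w hne).1
        have hlenR : R.length < w.length := (length_split w hne).2
        have hLn : L.length ≤ n := by omega
        have hRn : R.length ≤ n := by omega
        -- nodup facts
        have hndLR : (L ++ m :: R).Nodup := hsplit ▸ hnd
        have hndL : L.Nodup := (List.nodup_append.1 hndLR).1
        have hndmR : (m :: R).Nodup := (List.nodup_append.1 hndLR).2.1
        have hndR : R.Nodup := (List.nodup_cons.1 hndmR).2
        have hmR : m ∉ R := (List.nodup_cons.1 hndmR).1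
        -- order facts
        have hLlt : ∀ y ∈ L, y < m := by
          intro y hy
          have h1 : y ∈ w := (List.takeWhile_sublist _).mem hy
          have h2 := le_foldr_max w y h1
          have h3 : y ≠ m := by
            have := List.mem_takeWhile_imp hy
            simpa using this
          omega
        have hRlt : ∀ y ∈ R, y < m := by
          intro y hy
          have h1 : y ∈ w := by rw [hsplit]; simp [hy]
          have h2 := le_foldr_max w y h1
          have h3 : y ≠ m := fun h => hmR (h ▸ hy)
          omega
        obtain ⟨hpL, hiL, heL⟩ := ih L hLn hndL
        obtain ⟨hpR, hiR, heR⟩ := ih R hRn hndR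
        have hs : stackSort w = stackSort L ++ stackSort R ++ [m] := stackSort_cons x xs
        have hmemL : ∀ y ∈ stackSort L, y < m := fun y hy => hLlt y (hpL.mem_iff.1 hy)
        have hmemR : ∀ y ∈ stackSort R, y < m := fun y hy => hRlt y (hpR.mem_iff.1 hy)
        -- Perm
        have hperm : (stackSort w).Perm w := by
          rw [hs, hsplit, List.append_assoc]
          exact hpL.append ((hpR.append_right [m]).trans (List.perm_append_singleton m R))
        -- inv computations
        have eqW : inv w = inv L + inv R + R.length + cross L R := by
          conv_lhs => rw [hsplit]
          rw [inv_append]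
          have h1 : inv (m :: R) = R.length + inv R := by
            show R.countP (fun y => y < m) + inv R = R.length + inv R
            rw [List.countP_eq_length.2 (fun y hy => by simpa using hRlt y hy)]
          have h2 : cross L (m :: R) = cross L R := by
            have h3 : (m :: R) = [m] ++ R := rfl
            rw [h3, cross_append_right]
            rw [cross_eq_zero (fun y hy x hx => by
              simp at hy
              subst hy
              exact fun h => absurd (hLlt x hx) (by omega))]
            omega
          rw [h1, h2]; ring
        have eqS : inv (stackSort w) = inv (stackSort L) + inv (stackSort R) + cross L R := by
          rw [hs, List.append_assoc, inv_append, inv_append]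
          have c1 : inv [m] = 0 := by simp [inv]
          have c2 : cross (stackSort R) [m] = 0 :=
            cross_eq_zero (fun y hy x hx => by
              simp at hy; subst hy
              exact fun hc => absurd (hmemR x hx) (by omega))
          have c3 : cross (stackSort L) (stackSort R ++ [m]) = cross L R := by
            rw [cross_append_right]
            have c4 : cross (stackSort L) [m] = 0 :=
              cross_eq_zero (fun y hy x hx => by
                simp at hy; subst hy
                exact fun hc => absurd (hmemL x hx) (by omega))
            rw [c4, cross_perm_left hpL, cross_perm_right L hpR]
            omega
          rw [c1, c2, c3]; ring
        refine ⟨hperm, by omega, ?_⟩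
        rw [eqW, eqS]
        constructor
        · intro heq
          have hR0 : R = [] := List.length_eq_zero_iff.1 (by omega)
          have hsL : L.Pairwise (· < ·) := heL.1 (by omega)
          rw [hsplit, hR0]
          rw [List.pairwise_append]
          exact ⟨hsL, by simp, fun a ha b hb => by
            simp at hb; subst hb; exact hLlt a ha⟩
        · intro hsort
          rw [hsplit] at hsort
          rw [List.pairwise_append] at hsort
          obtain ⟨hsL, hsmR, _⟩ := hsort
          rw [List.pairwise_cons] at hsmR
          have hR0 : R = [] := by
            cases hRc : R with
            | nil => rfl
            | cons y ys =>
                exact absurd (hsmR.1 y (by simp [hRc])) (by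
                  have := hRlt y (by simp [hRc]); omega)
          have e1 : inv (stackSort L) = inv L := heL.2 hsL
          have e2 : inv (stackSort R) = inv R := by rw [hR0]; rfl
          rw [hR0] at *
          simp at *
          omega

theorem stackSort_inversions (n : ℕ) (w : List ℕ) (hw : IsPermWord n w) :
    inversions (stackSort w) ≤ inversions w ∧
      (inversions (stackSort w) = inversions w ↔ w = List.range' 1 n) := by
  have hnd : w.Nodup := hw.nodup_iff.2 (List.nodup_range' (s := 1) (n := n))
  obtain ⟨hperm, hle, heq⟩ := main_lemma w.length w le_rfl hnd
  rw [inversions_eq_inv, inversions_eq_inv]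
  refine ⟨hle, heq.trans ?_⟩
  haveI : IsAntisymm ℕ (· < ·) := ⟨fun a b h1 h2 => absurd h1 (by omega)⟩
  constructor
  · intro hs
    exact List.Perm.eq_of_pairwise (fun a b _ _ h1 h2 => absurd h1 (by omega)) hs (List.pairwise_lt_range' (s := 1) (n := n)) hw
  · intro h
    rw [h]
    exact List.pairwise_lt_range' (s := 1) (n := n)
end
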